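/- Let (R, d) be a compact metric space of diameter at most 1, K = {f ∈ C(R) : ‖f‖∞ ≤ 1 and f is 1-Lipschitz}, Y a real Banach space, and j : K → Y a distance-preserving map with j(0) = 0. Fix t ∈ R and define φ_t ∈ C(R) by φ_t(s) = 1 − d(s, t). Let y* be a continuous linear functional on Y with ‖y*‖ = 1 and y*(j(φ_t) − j(−φ_t)) = 2. Then for every φ ∈ C(R) with ‖φ‖∞ ≤ 1/5 and Lipschitz constant at most 1/5, one has y*(j(φ)) = φ(t). -/

import Mathlib

/-- The function `φ_t(s) = 1 - d(s, t)` as a continuous map. -/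
noncomputable def phiFn (R : Type*) [MetricSpace R] (t : R) : C(R, ℝ) :=
  ⟨fun s => 1 - dist s t, by continuity⟩

/-- Let `R` be a compact metric space of diameter at most `1`,
`K = {f ∈ C(R) : ‖f‖∞ ≤ 1 and f 1-Lipschitz}`, `Y` a real Banach space, and `j : K → Y` a
distance-preserving map with `j 0 = 0`. Fix `t ∈ R`, and let `y*` be a norm-one functional on
`Y` with `y* (j φ_t - j (-φ_t)) = 2`, where `φ_t(s) = 1 - d(s, t)`. Then for every `φ ∈ C(R)`
with `‖φ‖∞ ≤ 1/5` and Lipschitz constant at most `1/5`, one has `y* (j φ) = φ(t)`. -/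
theorem stmt15 (R : Type*) [MetricSpace R] [CompactSpace R]
    (hdiam : Metric.diam (Set.univ : Set R) ≤ 1)
    (K : Set C(R, ℝ)) (hK : K = {f : C(R, ℝ) | ‖f‖ ≤ 1 ∧ LipschitzWith 1 f})
    (Y : Type*) [NormedAddCommGroup Y] [NormedSpace ℝ Y] [CompleteSpace Y]
    (j : K → Y) (hj : Isometry j)
    (hj0 : ∀ h0 : (0 : C(R, ℝ)) ∈ K, j ⟨0, h0⟩ = 0)
    (t : R) (y : Y →L[ℝ] ℝ) (hy : ‖y‖ = 1)
    (hy2 : ∀ (h1 : phiFn R t ∈ K) (h2 : -phiFn R t ∈ K),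
      y (j ⟨phiFn R t, h1⟩ - j ⟨-phiFn R t, h2⟩) = 2) :
    ∀ (φ : C(R, ℝ)), ‖φ‖ ≤ 1 / 5 → LipschitzWith (1 / 5) φ →
      ∀ hmem : φ ∈ K, y (j ⟨φ, hmem⟩) = φ t := by
  intro φ hφn hφl hmem
  have hd : ∀ s : R, dist s t ≤ 1 := fun s =>
    le_trans (Metric.dist_le_diam_of_mem isCompact_univ.isBounded trivial trivial) hdiam
  have hφd : ∀ s : R, |φ s - φ t| ≤ (1/5) * dist s t := by
    intro s
    have := hφl.dist_le_mul s t
    simpa [Real.dist_eq] using this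
  have hφt : |φ t| ≤ 1/5 := by
    have := (ContinuousMap.norm_coe_le_norm φ t).trans hφn
    simpa using this
  -- membership facts
  have hlipd : LipschitzWith 1 (phiFn R t) := by
    apply LipschitzWith.of_dist_le_mul
    intro a b
    simp only [phiFn, ContinuousMap.coe_mk, Real.dist_eq, NNReal.coe_one, one_mul]
    have := abs_dist_sub_le a b t
    rw [show (1 - dist a t) - (1 - dist b t) = -(dist a t - dist b t) by ring, abs_neg]
    exact this
  have hnormd : ‖phiFn R t‖ ≤ 1 := by
    rw [ContinuousMap.norm_le _ (by norm_num : (0:ℝ) ≤ 1)]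
    intro s
    have h0 : 0 ≤ dist s t := dist_nonneg
    have h1 := hd s
    simp only [phiFn, ContinuousMap.coe_mk, Real.norm_eq_abs, abs_le]
    constructor <;> linarith
  have h1 : phiFn R t ∈ K := by rw [hK]; exact ⟨hnormd, hlipd⟩
  have h2 : -phiFn R t ∈ K := by
    rw [hK]
    refine ⟨by simpa using hnormd, ?_⟩
    simpa using hlipd.neg
  have h0K : (0 : C(R, ℝ)) ∈ K := by
    rw [hK]
    refine ⟨by simp, ?_⟩
    have : LipschitzWith 1 (fun _ : R => (0:ℝ)) := (LipschitzWith.const 0).weaken zero_le_one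
    exact this
  -- norm of image under isometry
  have hjn : ∀ (a b : K), ‖j a - j b‖ = ‖(a : C(R,ℝ)) - b‖ := by
    intro a b
    rw [← dist_eq_norm, hj.dist_eq, Subtype.dist_eq, dist_eq_norm]
  have hyv : ∀ v : Y, |y v| ≤ ‖v‖ := by
    intro v
    calc |y v| ≤ ‖y‖ * ‖v‖ := y.le_opNorm v
    _ = ‖v‖ := by rw [hy, one_mul]
  -- y(j φ_t) = 1 and y(j (-φ_t)) = -1
  have hA : |y (j ⟨phiFn R t, h1⟩)| ≤ 1 := by
    have := hyv (j ⟨phiFn R t, h1⟩ - j ⟨0, h0K⟩)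
    rw [hjn, hj0 h0K] at this
    simpa using this.trans (by simpa using hnormd)
  have hB : |y (j ⟨-phiFn R t, h2⟩)| ≤ 1 := by
    have := hyv (j ⟨-phiFn R t, h2⟩ - j ⟨0, h0K⟩)
    rw [hjn, hj0 h0K] at this
    simpa using this.trans (by simpa using hnormd)
  have hsum : y (j ⟨phiFn R t, h1⟩) - y (j ⟨-phiFn R t, h2⟩) = 2 := by
    rw [← map_sub]; exact hy2 h1 h2
  rw [abs_le] at hA hB
  have hyp : y (j ⟨phiFn R t, h1⟩) = 1 := by linarith
  have hym : y (j ⟨-phiFn R t, h2⟩) = -1 := by linarith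
  -- norm estimates
  have hnm : ‖phiFn R t - φ‖ ≤ 1 - φ t := by
    rw [ContinuousMap.norm_le _ (by rw [abs_le] at hφt; linarith)]
    intro s
    have hds := hd s
    have h0 : 0 ≤ dist s t := dist_nonneg
    have := hφd s
    rw [abs_le] at this hφt
    simp only [ContinuousMap.sub_apply, phiFn, ContinuousMap.coe_mk, Real.norm_eq_abs, abs_le]
    constructor <;> linarith
  have hnp : ‖phiFn R t + φ‖ ≤ 1 + φ t := by
    rw [ContinuousMap.norm_le _ (by rw [abs_le] at hφt; linarith)]
    intro s
    have hds := hd s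
    have h0 : 0 ≤ dist s t := dist_nonneg
    have := hφd s
    rw [abs_le] at this hφt
    simp only [ContinuousMap.add_apply, phiFn, ContinuousMap.coe_mk, Real.norm_eq_abs, abs_le]
    constructor <;> linarith
  -- squeeze
  have e1 : y (j ⟨phiFn R t, h1⟩) - y (j ⟨φ, hmem⟩) ≤ 1 - φ t := by
    have := (hyv (j ⟨phiFn R t, h1⟩ - j ⟨φ, hmem⟩))
    rw [hjn] at this
    have h := (abs_le.mp this).2
    rw [map_sub] at h
    exact h.trans hnm
  have e2 : y (j ⟨φ, hmem⟩) - y (j ⟨-phiFn R t, h2⟩) ≤ 1 + φ t := by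
    have := (hyv (j ⟨φ, hmem⟩ - j ⟨-phiFn R t, h2⟩))
    rw [hjn] at this
    have h := (abs_le.mp this).2
    rw [map_sub] at h
    refine h.trans (le_trans (le_of_eq ?_) hnp)
    rw [sub_neg_eq_add, add_comm]
  linarith
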